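/- arXiv:1210.8419 — 3 statements merged into one kernel-verified Lean document; each statement's English description precedes it below -/
import Mathlib

section
/- Let A and B be 4×4 real matrices of the normal form A = rows (1,0,1,a₁₄), (0,1,1,a₂₄), (0,0,1,a₃₄), (0,0,0,1) and B = rows (1,0,0,0), (b₂₁,1,0,0), (b₃₁,1,1,0), (1,1,0,1) with a₁₄, a₂₄, a₃₄, b₂₁, b₃₁ ∈ ℝ, and suppose both A and B are SO(3,1)-parabolic. If A·W = W·B where W = B·A⁻¹·B⁻¹·A, then there exists t ∈ ℝ, t ≠ 2, with (a₁₄, a₂₄, a₃₄, b₂₁, b₃₁) = ((3−t)/(t−2), 1/(t−2), t/(2(t−2)), t, 2). -/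
set_option maxHeartbeats 3200000
open Matrix
noncomputable section

/-- The standard `SO(3,1)`-parabolic: unipotent with Jordan blocks of sizes 3 and 1. -/
def so31ParabolicModel : Matrix (Fin 4) (Fin 4) ℝ :=
  !![1, 0, 0, 0;
     0, 1, 1, 0;
     0, 0, 1, 1;
     0, 0, 0, 1]

/-- A matrix is `SO(3,1)`-parabolic if it is conjugate in `GL(4,ℝ)` to the unipotent
matrix with Jordan blocks of sizes 3 and 1. -/
def IsSO31Parabolic (M : Matrix (Fin 4) (Fin 4) ℝ) : Prop :=
  ∃ P : GL (Fin 4) ℝ, M = (P : Matrix (Fin 4) (Fin 4) ℝ) * so31ParabolicModel *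
    ((P⁻¹ : GL (Fin 4) ℝ) : Matrix (Fin 4) (Fin 4) ℝ)

/-- Normal form of the first meridian. -/
def nfA (a₁₄ a₂₄ a₃₄ : ℝ) : Matrix (Fin 4) (Fin 4) ℝ :=
  !![1, 0, 1, a₁₄;
     0, 1, 1, a₂₄;
     0, 0, 1, a₃₄;
     0, 0, 0, 1]

/-- Normal form of the second meridian. -/
def nfB (b₂₁ b₃₁ : ℝ) : Matrix (Fin 4) (Fin 4) ℝ :=
  !![1, 0, 0, 0;
     b₂₁, 1, 0, 0;
     b₃₁, 1, 1, 0;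
     1, 1, 0, 1]

/-- A parabolic matrix has `(M - 1)² ≠ 0`. -/
lemma IsSO31Parabolic.sq_ne_zero {M : Matrix (Fin 4) (Fin 4) ℝ}
    (h : IsSO31Parabolic M) : (M - 1) * (M - 1) ≠ 0 := by
  rcases h with ⟨P, hP⟩
  intro h0
  set Q : Matrix (Fin 4) (Fin 4) ℝ := ((P⁻¹ : GL (Fin 4) ℝ) : Matrix (Fin 4) (Fin 4) ℝ)
    with hQ
  have hPQ : (P : Matrix (Fin 4) (Fin 4) ℝ) * Q = 1 := P.mul_inv
  have hQP : Q * (P : Matrix (Fin 4) (Fin 4) ℝ) = 1 := P.inv_mul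
  have conj : ∀ X Y : Matrix (Fin 4) (Fin 4) ℝ,
      ((P : Matrix (Fin 4) (Fin 4) ℝ) * X * Q) * ((P : Matrix (Fin 4) (Fin 4) ℝ) * Y * Q)
        = (P : Matrix (Fin 4) (Fin 4) ℝ) * (X * Y) * Q := by
    intro X Y
    calc ((P : Matrix (Fin 4) (Fin 4) ℝ) * X * Q) * ((P : Matrix (Fin 4) (Fin 4) ℝ) * Y * Q)
        = (P : Matrix (Fin 4) (Fin 4) ℝ) * X * (Q * (P : Matrix (Fin 4) (Fin 4) ℝ)) * (Y * Q) := by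
          simp only [mul_assoc]
      _ = (P : Matrix (Fin 4) (Fin 4) ℝ) * (X * Y) * Q := by
          rw [hQP, mul_one]; simp only [mul_assoc]
  have h1 : M - 1 = (P : Matrix (Fin 4) (Fin 4) ℝ) * (so31ParabolicModel - 1) * Q := by
    rw [hP, mul_sub, sub_mul, mul_one, hPQ]
  rw [h1, conj] at h0
  have h3 : (so31ParabolicModel - 1) * (so31ParabolicModel - 1) = 0 := by
    calc (so31ParabolicModel - 1) * (so31ParabolicModel - 1)
        = (Q * (P : Matrix (Fin 4) (Fin 4) ℝ)) *
            ((so31ParabolicModel - 1) * (so31ParabolicModel - 1)) *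
            (Q * (P : Matrix (Fin 4) (Fin 4) ℝ)) := by rw [hQP, one_mul, mul_one]
      _ = Q * ((P : Matrix (Fin 4) (Fin 4) ℝ) *
            ((so31ParabolicModel - 1) * (so31ParabolicModel - 1)) * Q) *
            (P : Matrix (Fin 4) (Fin 4) ℝ) := by simp only [mul_assoc]
      _ = Q * 0 * (P : Matrix (Fin 4) (Fin 4) ℝ) := by rw [h0]
      _ = 0 := by simp
  have h4 := congrFun (congrFun h3 1) 3
  simp [so31ParabolicModel, Matrix.mul_apply, Fin.sum_univ_four, Matrix.sub_apply,
    Matrix.one_apply, Matrix.vecHead, Matrix.vecTail] at h4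

/-- **Figure-eight knot: the solution variety.**  If `A`, `B` are `SO(3,1)`-parabolic
matrices in the normal form above satisfying the figure-eight relation `A·W = W·B` with
`W = B A⁻¹ B⁻¹ A`, then the parameters lie on the one-parameter family of the paper. -/
theorem fig8_parabolic_solutions (a₁₄ a₂₄ a₃₄ b₂₁ b₃₁ : ℝ)
    (hA : IsSO31Parabolic (nfA a₁₄ a₂₄ a₃₄))
    (hB : IsSO31Parabolic (nfB b₂₁ b₃₁))
    (hrel : nfA a₁₄ a₂₄ a₃₄ *
        (nfB b₂₁ b₃₁ * (nfA a₁₄ a₂₄ a₃₄)⁻¹ * (nfB b₂₁ b₃₁)⁻¹ * nfA a₁₄ a₂₄ a₃₄) =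
      (nfB b₂₁ b₃₁ * (nfA a₁₄ a₂₄ a₃₄)⁻¹ * (nfB b₂₁ b₃₁)⁻¹ * nfA a₁₄ a₂₄ a₃₄) *
        nfB b₂₁ b₃₁) :
    ∃ t : ℝ, t ≠ 2 ∧ a₁₄ = (3 - t)/(t - 2) ∧ a₂₄ = 1/(t - 2) ∧
      a₃₄ = t/(2*(t - 2)) ∧ b₂₁ = t ∧ b₃₁ = 2 := by
  -- nondegeneracy from parabolicity
  have ha34 : a₃₄ ≠ 0 := by
    intro h0
    apply hA.sq_ne_zero
    ext i j
    fin_cases i <;> fin_cases j <;>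
      simp [nfA, h0, Matrix.mul_apply, Fin.sum_univ_four, Matrix.sub_apply,
        Matrix.one_apply, Matrix.vecHead, Matrix.vecTail]
  have hb21 : b₂₁ ≠ 0 := by
    intro h0
    apply hB.sq_ne_zero
    ext i j
    fin_cases i <;> fin_cases j <;>
      simp [nfB, h0, Matrix.mul_apply, Fin.sum_univ_four, Matrix.sub_apply,
        Matrix.one_apply, Matrix.vecHead, Matrix.vecTail]
  -- explicit inverses
  have hAinv : (nfA a₁₄ a₂₄ a₃₄)⁻¹ =
      !![1, 0, -1, a₃₄ - a₁₄; 0, 1, -1, a₃₄ - a₂₄; 0, 0, 1, -a₃₄; 0, 0, 0, 1] := by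
    apply Matrix.inv_eq_right_inv
    ext i j
    fin_cases i <;> fin_cases j <;>
      simp [nfA, Matrix.mul_apply, Fin.sum_univ_four, Matrix.one_apply,
        Matrix.vecHead, Matrix.vecTail] <;> ring
  have hBinv : (nfB b₂₁ b₃₁)⁻¹ =
      !![1, 0, 0, 0; -b₂₁, 1, 0, 0; b₂₁ - b₃₁, -1, 1, 0; b₂₁ - 1, -1, 0, 1] := by
    apply Matrix.inv_eq_right_inv
    ext i j
    fin_cases i <;> fin_cases j <;>
      simp [nfB, Matrix.mul_apply, Fin.sum_univ_four, Matrix.one_apply,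
        Matrix.vecHead, Matrix.vecTail] <;> ring
  rw [hAinv, hBinv] at hrel
  -- compute the word W = B A⁻¹ B⁻¹ A explicitly, step by step
  have e1 : nfB b₂₁ b₃₁ *
      !![1, 0, -1, a₃₄ - a₁₄; 0, 1, -1, a₃₄ - a₂₄; 0, 0, 1, -a₃₄; 0, 0, 0, 1] =
      !![(1), (0:ℝ), (-1), (a₃₄ + (-1)*a₁₄);
       (b₂₁), (1), (-1 + (-1)*b₂₁), (a₃₄ + a₃₄*b₂₁ + (-1)*a₂₄ + (-1)*a₁₄*b₂₁);
       (b₃₁), (1), ((-1)*b₃₁), (a₃₄*b₃₁ + (-1)*a₂₄ + (-1)*a₁₄*b₃₁);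
       (1), (1), (-2), (1 + (2)*a₃₄ + (-1)*a₂₄ + (-1)*a₁₄)] := by
    ext i j
    fin_cases i <;> fin_cases j <;>
      simp [nfB, Matrix.mul_apply, Fin.sum_univ_four,
        Matrix.vecHead, Matrix.vecTail] <;> ring
  rw [e1] at hrel
  have e2 : (!![(1), (0:ℝ), (-1), (a₃₄ + (-1)*a₁₄);
       (b₂₁), (1), (-1 + (-1)*b₂₁), (a₃₄ + a₃₄*b₂₁ + (-1)*a₂₄ + (-1)*a₁₄*b₂₁);
       (b₃₁), (1), ((-1)*b₃₁), (a₃₄*b₃₁ + (-1)*a₂₄ + (-1)*a₁₄*b₃₁);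
       (1), (1), (-2), (1 + (2)*a₃₄ + (-1)*a₂₄ + (-1)*a₁₄)] : Matrix (Fin 4) (Fin 4) ℝ) *
      !![1, 0, 0, 0; -b₂₁, 1, 0, 0; b₂₁ - b₃₁, -1, 1, 0; b₂₁ - 1, -1, 0, 1] =
      !![(1 + b₃₁ + (-1)*b₂₁ + (-1)*a₃₄ + a₃₄*b₂₁ + a₁₄ + (-1)*a₁₄*b₂₁), (1 + (-1)*a₃₄ + a₁₄), (-1), (a₃₄ + (-1)*a₁₄);
       (b₃₁ + (-1)*b₂₁ + b₂₁*b₃₁ + (-1)*b₂₁*b₂₁ + (-1)*a₃₄ + a₃₄*b₂₁*b₂₁ + a₂₄ + (-1)*a₂₄*b₂₁ + a₁₄*b₂₁ + (-1)*a₁₄*b₂₁*b₂₁), (2 + b₂₁ + (-1)*a₃₄ + (-1)*a₃₄*b₂₁ + a₂₄ + a₁₄*b₂₁), (-1 + (-1)*b₂₁), (a₃₄ + a₃₄*b₂₁ + (-1)*a₂₄ + (-1)*a₁₄*b₂₁);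
       (b₃₁ + b₃₁*b₃₁ + (-1)*b₂₁ + (-1)*b₂₁*b₃₁ + (-1)*a₃₄*b₃₁ + a₃₄*b₂₁*b₃₁ + a₂₄ + (-1)*a₂₄*b₂₁ + a₁₄*b₃₁ + (-1)*a₁₄*b₂₁*b₃₁), (1 + b₃₁ + (-1)*a₃₄*b₃₁ + a₂₄ + a₁₄*b₃₁), ((-1)*b₃₁), (a₃₄*b₃₁ + (-1)*a₂₄ + (-1)*a₁₄*b₃₁);
       ((2)*b₃₁ + (-2)*b₂₁ + (-2)*a₃₄ + (2)*a₃₄*b₂₁ + a₂₄ + (-1)*a₂₄*b₂₁ + a₁₄ + (-1)*a₁₄*b₂₁), (2 + (-2)*a₃₄ + a₂₄ + a₁₄), (-2), (1 + (2)*a₃₄ + (-1)*a₂₄ + (-1)*a₁₄)] := by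
    ext i j
    fin_cases i <;> fin_cases j <;>
      simp [Matrix.mul_apply, Fin.sum_univ_four,
        Matrix.vecHead, Matrix.vecTail] <;> ring
  rw [e2] at hrel
  have e3 : (!![(1 + b₃₁ + (-1)*b₂₁ + (-1)*a₃₄ + a₃₄*b₂₁ + a₁₄ + (-1)*a₁₄*b₂₁), (1 + (-1)*a₃₄ + a₁₄), (-1), (a₃₄ + (-1)*a₁₄);
       (b₃₁ + (-1)*b₂₁ + b₂₁*b₃₁ + (-1)*b₂₁*b₂₁ + (-1)*a₃₄ + a₃₄*b₂₁*b₂₁ + a₂₄ + (-1)*a₂₄*b₂₁ + a₁₄*b₂₁ + (-1)*a₁₄*b₂₁*b₂₁), (2 + b₂₁ + (-1)*a₃₄ + (-1)*a₃₄*b₂₁ + a₂₄ + a₁₄*b₂₁), (-1 + (-1)*b₂₁), (a₃₄ + a₃₄*b₂₁ + (-1)*a₂₄ + (-1)*a₁₄*b₂₁);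
       (b₃₁ + b₃₁*b₃₁ + (-1)*b₂₁ + (-1)*b₂₁*b₃₁ + (-1)*a₃₄*b₃₁ + a₃₄*b₂₁*b₃₁ + a₂₄ + (-1)*a₂₄*b₂₁ + a₁₄*b₃₁ + (-1)*a₁₄*b₂₁*b₃₁), (1 + b₃₁ + (-1)*a₃₄*b₃₁ + a₂₄ + a₁₄*b₃₁), ((-1)*b₃₁), (a₃₄*b₃₁ + (-1)*a₂₄ + (-1)*a₁₄*b₃₁);
       ((2)*b₃₁ + (-2)*b₂₁ + (-2)*a₃₄ + (2)*a₃₄*b₂₁ + a₂₄ + (-1)*a₂₄*b₂₁ + a₁₄ + (-1)*a₁₄*b₂₁), (2 + (-2)*a₃₄ + a₂₄ + a₁₄), (-2), (1 + (2)*a₃₄ + (-1)*a₂₄ + (-1)*a₁₄)] : Matrix (Fin 4) (Fin 4) ℝ) *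
      nfA a₁₄ a₂₄ a₃₄ =
      !![(1 + b₃₁ + (-1)*b₂₁ + (-1)*a₃₄ + a₃₄*b₂₁ + a₁₄ + (-1)*a₁₄*b₂₁), (1 + (-1)*a₃₄ + a₁₄), (1 + b₃₁ + (-1)*b₂₁ + (-2)*a₃₄ + a₃₄*b₂₁ + (2)*a₁₄ + (-1)*a₁₄*b₂₁), (a₂₄ + (-1)*a₂₄*a₃₄ + a₁₄*b₃₁ + (-1)*a₁₄*b₂₁ + (-1)*a₁₄*a₃₄ + a₁₄*a₃₄*b₂₁ + a₁₄*a₂₄ + a₁₄*a₁₄ + (-1)*a₁₄*a₁₄*b₂₁);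
       (b₃₁ + (-1)*b₂₁ + b₂₁*b₃₁ + (-1)*b₂₁*b₂₁ + (-1)*a₃₄ + a₃₄*b₂₁*b₂₁ + a₂₄ + (-1)*a₂₄*b₂₁ + a₁₄*b₂₁ + (-1)*a₁₄*b₂₁*b₂₁), (2 + b₂₁ + (-1)*a₃₄ + (-1)*a₃₄*b₂₁ + a₂₄ + a₁₄*b₂₁), (1 + b₃₁ + (-1)*b₂₁ + b₂₁*b₃₁ + (-1)*b₂₁*b₂₁ + (-2)*a₃₄ + (-1)*a₃₄*b₂₁ + a₃₄*b₂₁*b₂₁ + (2)*a₂₄ + (-1)*a₂₄*b₂₁ + (2)*a₁₄*b₂₁ + (-1)*a₁₄*b₂₁*b₂₁), (a₂₄ + a₂₄*b₂₁ + (-1)*a₂₄*a₃₄ + (-1)*a₂₄*a₃₄*b₂₁ + a₂₄*a₂₄ + a₁₄*b₃₁ + (-2)*a₁₄*b₂₁ + a₁₄*b₂₁*b₃₁ + (-1)*a₁₄*b₂₁*b₂₁ + (-1)*a₁₄*a₃₄ + a₁₄*a₃₄*b₂₁*b₂₁ + a₁₄*a₂₄ + a₁₄*a₁₄*b₂₁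 + (-1)*a₁₄*a₁₄*b₂₁*b₂₁);
       (b₃₁ + b₃₁*b₃₁ + (-1)*b₂₁ + (-1)*b₂₁*b₃₁ + (-1)*a₃₄*b₃₁ + a₃₄*b₂₁*b₃₁ + a₂₄ + (-1)*a₂₄*b₂₁ + a₁₄*b₃₁ + (-1)*a₁₄*b₂₁*b₃₁), (1 + b₃₁ + (-1)*a₃₄*b₃₁ + a₂₄ + a₁₄*b₃₁), (1 + b₃₁ + b₃₁*b₃₁ + (-1)*b₂₁ + (-1)*b₂₁*b₃₁ + (-2)*a₃₄*b₃₁ + a₃₄*b₂₁*b₃₁ + (2)*a₂₄ + (-1)*a₂₄*b₂₁ + (2)*a₁₄*b₃₁ + (-1)*a₁₄*b₂₁*b₃₁), (a₂₄*b₃₁ + (-1)*a₂₄*a₃₄*b₃₁ + a₂₄*a₂₄ + a₁₄*b₃₁*b₃₁ + (-1)*a₁₄*b₂₁ + (-1)*a₁₄*b₂₁*b₃₁ + (-1)*a₁₄*a₃₄*b₃₁ + a₁₄*a₃₄*b₂₁*b₃₁ + a₁₄*a₂₄ + a₁₄*a₂₄*b₃₁ + (-1)*a₁₄*a₂₄*b₂₁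 + a₁₄*a₁₄*b₃₁ + (-1)*a₁₄*a₁₄*b₂₁*b₃₁);
       ((2)*b₃₁ + (-2)*b₂₁ + (-2)*a₃₄ + (2)*a₃₄*b₂₁ + a₂₄ + (-1)*a₂₄*b₂₁ + a₁₄ + (-1)*a₁₄*b₂₁), (2 + (-2)*a₃₄ + a₂₄ + a₁₄), ((2)*b₃₁ + (-2)*b₂₁ + (-4)*a₃₄ + (2)*a₃₄*b₂₁ + (2)*a₂₄ + (-1)*a₂₄*b₂₁ + (2)*a₁₄ + (-1)*a₁₄*b₂₁), (1 + a₂₄ + (-2)*a₂₄*a₃₄ + a₂₄*a₂₄ + (-1)*a₁₄ + (2)*a₁₄*b₃₁ + (-2)*a₁₄*b₂₁ + (-2)*a₁₄*a₃₄ + (2)*a₁₄*a₃₄*b₂₁ + (2)*a₁₄*a₂₄ + (-1)*a₁₄*a₂₄*b₂₁ + a₁₄*a₁₄ + (-1)*a₁₄*a₁₄*b₂₁)] := by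
    ext i j
    fin_cases i <;> fin_cases j <;>
      simp [nfA, Matrix.mul_apply, Fin.sum_univ_four,
        Matrix.vecHead, Matrix.vecTail] <;> ring
  rw [e3] at hrel
  -- extract the four scalar equations we need
  have h01 := congrFun (congrFun hrel 0) 1
  have h22 := congrFun (congrFun hrel 2) 2
  have h30 := congrFun (congrFun hrel 3) 0
  have h31 := congrFun (congrFun hrel 3) 1
  simp [nfA, nfB, Matrix.mul_apply, Fin.sum_univ_four,
    Matrix.vecHead, Matrix.vecTail] at h01 h22 h30 h31
  -- scalar algebra
  have he1 : 2*b₃₁ - 2*b₂₁ + (2 - b₂₁)*(a₁₄ + a₂₄ - 2*a₃₄) = 0 := by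
    rcases h22 with h | h
    · exact absurd h ha34
    · linear_combination h
  have hs1 : a₁₄ + a₂₄ - 2*a₃₄ + 2 = 0 := by
    have h : b₂₁ * (a₁₄ + a₂₄ - 2*a₃₄ + 2) = 0 := by
      linear_combination (1 - b₃₁) * he1 - h30 + h31
    rcases mul_eq_zero.mp h with h | h
    · exact absurd h hb21
    · exact h
  have hp2 : 2*a₁₄ - 2*a₃₄ + 3 = 0 := by
    linear_combination (-1 - a₁₄) * he1 + (1 - a₂₄ + a₁₄) * hs1 - h31
  have hb31 : b₃₁ = 2 := by
    linear_combination (1/2) * he1 - ((2 - b₂₁)/2) * hs1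
  have hp3 : b₂₁ + 4*a₃₄ - 2*a₃₄*b₂₁ = 0 := by
    linear_combination 4*h01 + 2*a₃₄*he1 - (8*a₃₄ - 2*a₃₄*b₂₁)*hs1
      - (b₂₁ - 4*a₃₄ + 2*a₁₄*b₂₁)*hp2
  have ht2 : b₂₁ ≠ 2 := by
    intro h2
    rw [h2] at hp3
    have : (2:ℝ) = 0 := by linear_combination hp3
    norm_num at this
  have hsub : b₂₁ - 2 ≠ 0 := sub_ne_zero.mpr ht2
  refine ⟨b₂₁, ht2, ?_, ?_, ?_, rfl, hb31⟩
  · rw [eq_div_iff hsub]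
    linear_combination ((b₂₁ - 2)/2) * hp2 - (1/2) * hp3
  · rw [eq_div_iff hsub]
    linear_combination (b₂₁ - 2) * hs1 - ((b₂₁ - 2)/2) * hp2 - (1/2) * hp3
  · have h2 : 2*(b₂₁ - 2) ≠ 0 := mul_ne_zero two_ne_zero hsub
    rw [eq_div_iff h2]
    linear_combination (-1) * hp3

end
end

section
/- Let b₂₁, b₃₂ ∈ ℝ and set d = b₂₁ − 4b₃₂². Consider the symmetric 4×4 real matrix X with rows (1, −1, 2b₃₂, −b₂₁/2), (−1, 1, −2b₃₂, 2b₃₂²), (2b₃₂, −2b₃₂, b₂₁, −b₂₁b₃₂), (−b₂₁/2, 2b₃₂², −b₂₁b₃₂, b₂₁b₃₂²). If d > 0, then the quadratic form on ℝ⁴ defined by X has signature (3,1), i.e., X has exactly three positive eigenvalues and one negative eigenvalue. Moreover, if d > 0 and Ψ : ℝ⁴ → Herm₂ is the linear map sending (x,y,z,t) to the Hermitian matrix with diagonal entries x and d·t and off-diagonal entry (x − y + 2b₃₂z − 2b₃₂²t) + i(√d·z − b₃₂√d·t) (upper right; lower left its conjugate), then Ψ is a linear isomorphism and −det(Ψ(v))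 = vᵀXv for all v ∈ ℝ⁴. -/
open Matrix
noncomputable section

/-- The symmetric matrix `X` of the quadratic form `−det` transported to `ℝ⁴`. -/
def Xform (b₂₁ b₃₂ : ℝ) : Matrix (Fin 4) (Fin 4) ℝ :=
  !![1, -1, 2*b₃₂, -b₂₁/2;
     -1, 1, -2*b₃₂, 2*b₃₂^2;
     2*b₃₂, -2*b₃₂, b₂₁, -b₂₁*b₃₂;
     -b₂₁/2, 2*b₃₂^2, -b₂₁*b₃₂, b₂₁*b₃₂^2]

/-- The linear isomorphism `Ψ : ℝ⁴ → Herm₂` of the paper: `(x,y,z,t)` goes to the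
Hermitian matrix with diagonal entries `x`, `d·t` and upper-right entry
`(x − y + 2b₃₂z − 2b₃₂²t) + i(√d·z − b₃₂√d·t)`, where `d = b₂₁ − 4b₃₂²`. -/
def PsiHerm (b₂₁ b₃₂ : ℝ) (v : Fin 4 → ℝ) : Matrix (Fin 2) (Fin 2) ℂ :=
  !![(v 0 : ℂ),
     ((v 0 - v 1 + 2*b₃₂*(v 2) - 2*b₃₂^2*(v 3) : ℝ) : ℂ) +
       ((Real.sqrt (b₂₁ - 4*b₃₂^2) * v 2 - b₃₂ * Real.sqrt (b₂₁ - 4*b₃₂^2) * v 3 : ℝ) : ℂ) *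
         Complex.I;
     ((v 0 - v 1 + 2*b₃₂*(v 2) - 2*b₃₂^2*(v 3) : ℝ) : ℂ) -
       ((Real.sqrt (b₂₁ - 4*b₃₂^2) * v 2 - b₃₂ * Real.sqrt (b₂₁ - 4*b₃₂^2) * v 3 : ℝ) : ℂ) *
         Complex.I,
     (((b₂₁ - 4*b₃₂^2) * v 3 : ℝ) : ℂ)]

section Aux
open Polynomial

-- charpoly is invariant under conjugation
lemma charpoly_conj_aux {n : Type*} [Fintype n] [DecidableEq n] {R : Type*} [CommRing R]
    (V W B : Matrix n n R) (hVW : V * W = 1) :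
    (V * B * W).charpoly = B.charpoly := by
  have hmap : (V * W).map (C : R →+* R[X]) = 1 := by rw [hVW, Matrix.map_one _ (map_zero _) (map_one _)]
  have h1 : charmatrix (V * B * W) =
      V.map (C : R →+* R[X]) * charmatrix B * W.map (C : R →+* R[X]) := by
    unfold charmatrix
    rw [RingHom.mapMatrix_apply, RingHom.mapMatrix_apply]
    rw [Matrix.mul_sub, Matrix.sub_mul]
    congr 1
    · symm
      calc V.map (C : R →+* R[X]) * Matrix.scalar n (X : R[X]) * W.map (C : R →+* R[X])
          = Matrix.scalar n (X : R[X]) * (V.map (C : R →+* R[X]) * W.map (C : R →+* R[X])) := by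
            have c1 : V.map (C : R →+* R[X]) * Matrix.scalar n (X : R[X])
                = Matrix.scalar n (X : R[X]) * V.map (C : R →+* R[X]) :=
              ((Matrix.scalar_commute (X : R[X]) (fun r => Commute.all _ _) _).eq).symm
            rw [c1, Matrix.mul_assoc]
        _ = Matrix.scalar n (X : R[X]) := by rw [← Matrix.map_mul, hmap, mul_one]
    · rw [← Matrix.map_mul, ← Matrix.map_mul]
  unfold Matrix.charpoly
  rw [h1, Matrix.det_mul, Matrix.det_mul]
  have h2 : (V.map (C : R →+* R[X])).det * (W.map (C : R →+* R[X])).det = 1 := by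
    rw [← Matrix.det_mul, ← Matrix.map_mul, hmap, Matrix.det_one]
  calc (V.map (C : R →+* R[X])).det * (charmatrix B).det * (W.map (C : R →+* R[X])).det
      = (charmatrix B).det * ((V.map (C : R →+* R[X])).det * (W.map (C : R →+* R[X])).det) := by ring
    _ = (charmatrix B).det := by rw [h2, mul_one]

lemma charpoly_diagonal {n : Type*} [Fintype n] [DecidableEq n] {R : Type*} [CommRing R]
    (d : n → R) : (Matrix.diagonal d).charpoly = ∏ i, (X - C (d i)) := by
  have : charmatrix (Matrix.diagonal d) = Matrix.diagonal (fun i => X - C (d i)) := by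
    ext i j
    by_cases h : i = j
    · subst h; simp
    · simp [h, Matrix.diagonal_apply_ne _ h]
  rw [Matrix.charpoly, this, Matrix.det_diagonal]

lemma Xform_isHermitian (b₂₁ b₃₂ : ℝ) : (Xform b₂₁ b₃₂).IsHermitian := by
  show (Xform b₂₁ b₃₂)ᴴ = Xform b₂₁ b₃₂
  ext i j
  fin_cases i <;> fin_cases j <;> simp [Xform, Matrix.conjTranspose_apply]

lemma Xform_det (b₂₁ b₃₂ : ℝ) :
    (Xform b₂₁ b₃₂).det = -(b₂₁ - 4*b₃₂^2)^3 / 4 := by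
  simp [Xform, Matrix.det_succ_row_zero, Fin.sum_univ_succ, Fin.succAbove]
  ring

lemma herm_charpoly {n : Type*} [Fintype n] [DecidableEq n] {A : Matrix n n ℝ}
    (hA : A.IsHermitian) : A.charpoly = ∏ i, (X - C (hA.eigenvalues i)) := by
  have hst := hA.spectral_theorem
  have hmem := (Matrix.mem_unitaryGroup_iff).mp (hA.eigenvectorUnitary).2
  have hmem' := (Matrix.mem_unitaryGroup_iff').mp (hA.eigenvectorUnitary).2
  conv_lhs => rw [hst]
  rw [Unitary.conjStarAlgAut_apply, charpoly_conj_aux _ _ _ hmem]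
  have : (RCLike.ofReal ∘ hA.eigenvalues : n → ℝ) = hA.eigenvalues := by
    funext i; simp [RCLike.ofReal]
  rw [this, _root_.charpoly_diagonal]

lemma herm_roots {n : Type*} [Fintype n] [DecidableEq n] {A : Matrix n n ℝ}
    (hA : A.IsHermitian) :
    A.charpoly.roots = Multiset.map hA.eigenvalues Finset.univ.val := by
  rw [herm_charpoly hA, Polynomial.roots_prod]
  · simp [Polynomial.roots_X_sub_C, Multiset.bind_singleton]
  · rw [Finset.prod_ne_zero_iff]
    intro i _
    exact Polynomial.X_sub_C_ne_zero _

lemma Xform_quad (b₂₁ b₃₂ : ℝ) (c : Fin 4 → ℝ) :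
    c ⬝ᵥ (Xform b₂₁ b₃₂ *ᵥ c) =
      (c 0 - c 1 + 2*b₃₂*(c 2) - 2*b₃₂^2*(c 3))^2
      + (b₂₁-4*b₃₂^2)*(c 2 - b₃₂*(c 3))^2 - (c 0) * (b₂₁-4*b₃₂^2) * (c 3) := by
  simp [Xform, Matrix.mulVec, dotProduct, Fin.sum_univ_four]
  ring

lemma sq_pos_ne {a : ℝ} (h : a ≠ 0) : 0 < a ^ 2 := by
  rcases h.lt_or_gt with h' | h' <;> nlinarith

lemma pos_on_slice (b₂₁ b₃₂ : ℝ) (hd : 0 < b₂₁-4*b₃₂^2) (c : Fin 4 → ℝ)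
    (h0 : c 0 = -(b₂₁-4*b₃₂^2) * c 3) (hc : c ≠ 0) :
    0 < c ⬝ᵥ (Xform b₂₁ b₃₂ *ᵥ c) := by
  rw [Xform_quad]
  have key : c ⬝ᵥ c = c ⬝ᵥ c := rfl
  have hgoal : (c 0 - c 1 + 2*b₃₂*(c 2) - 2*b₃₂^2*(c 3))^2
      + (b₂₁-4*b₃₂^2)*(c 2 - b₃₂*(c 3))^2 - (c 0) * (b₂₁-4*b₃₂^2) * (c 3)
      = (c 0 - c 1 + 2*b₃₂*(c 2) - 2*b₃₂^2*(c 3))^2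
      + (b₂₁-4*b₃₂^2)*(c 2 - b₃₂*(c 3))^2 + (b₂₁-4*b₃₂^2)^2 * (c 3)^2 := by
    rw [h0]; ring
  rw [hgoal]
  have htri : (c 0 - c 1 + 2*b₃₂*(c 2) - 2*b₃₂^2*(c 3)) ≠ 0 ∨ (c 2 - b₃₂*(c 3)) ≠ 0 ∨ c 3 ≠ 0 := by
    by_contra h
    push_neg at h
    obtain ⟨h1, h2, h3⟩ := h
    apply hc
    have e0 : c 0 = 0 := by rw [h0, h3]; ring
    have e2 : c 2 = 0 := by rw [h3] at h2; linarith
    have e1 : c 1 = 0 := by rw [e0, e2, h3] at h1; linarith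
    funext i
    fin_cases i <;> simp [e0, e1, e2, h3]
  have t1 : 0 ≤ (c 0 - c 1 + 2*b₃₂*(c 2) - 2*b₃₂^2*(c 3))^2 := sq_nonneg _
  have t2 : 0 ≤ (b₂₁-4*b₃₂^2)*(c 2 - b₃₂*(c 3))^2 := mul_nonneg hd.le (sq_nonneg _)
  have t3 : 0 ≤ (b₂₁-4*b₃₂^2)^2 * (c 3)^2 := mul_nonneg (sq_nonneg _) (sq_nonneg _)
  rcases htri with h | h | h
  · have := sq_pos_ne h; linarith
  · have := mul_pos hd (sq_pos_ne h); linarith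
  · have := mul_pos (sq_pos_ne hd.ne') (sq_pos_ne h); linarith

section EigenQuad

variable {n : Type*} [Fintype n] [DecidableEq n] {A : Matrix n n ℝ} (hA : A.IsHermitian)

lemma herm_dot (i j : n) :
    ⇑(hA.eigenvectorBasis i) ⬝ᵥ ⇑(hA.eigenvectorBasis j) = if i = j then 1 else 0 := by
  have horth := hA.eigenvectorBasis.orthonormal
  rw [orthonormal_iff_ite] at horth
  simpa [PiLp.inner_apply, dotProduct, mul_comm] using horth i j

lemma eigen_quad (k l : n) (hkl : k ≠ l) (a b : ℝ) :
    (a • ⇑(hA.eigenvectorBasis k) + b • ⇑(hA.eigenvectorBasis l)) ⬝ᵥ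
      (A *ᵥ (a • ⇑(hA.eigenvectorBasis k) + b • ⇑(hA.eigenvectorBasis l)))
    = a^2 * hA.eigenvalues k + b^2 * hA.eigenvalues l := by
  simp only [Matrix.mulVec_add, Matrix.mulVec_smul, hA.mulVec_eigenvectorBasis,
    dotProduct_add, add_dotProduct, dotProduct_smul,
    smul_dotProduct, smul_smul, smul_eq_mul, herm_dot hA, hkl, hkl.symm]
  simp [hkl, hkl.symm]
  ring

end EigenQuad

lemma count_lemma (b₂₁ b₃₂ : ℝ) (hd : 0 < b₂₁ - 4*b₃₂^2) :
    (((Xform b₂₁ b₃₂).charpoly.roots.filter (fun μ : ℝ => 0 < μ)).card = 3 ∧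
     ((Xform b₂₁ b₃₂).charpoly.roots.filter (fun μ : ℝ => μ < 0)).card = 1) := by
  have hA := Xform_isHermitian b₂₁ b₃₂
  set ev := hA.eigenvalues with hev
  have hroots := herm_roots hA
  have hdet : (Xform b₂₁ b₃₂).det = ∏ i, ev i := by
    simpa using hA.det_eq_prod_eigenvalues
  have hdetneg : (Xform b₂₁ b₃₂).det < 0 := by
    rw [Xform_det]
    have := pow_pos hd 3
    linarith
  have hne : ∀ i, ev i ≠ 0 := by
    intro i hi
    rw [hdet, Finset.prod_eq_zero (Finset.mem_univ i) hi] at hdetneg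
    exact lt_irrefl 0 hdetneg
  -- at most one negative eigenvalue
  have huniq : ∀ k l : Fin 4, ev k < 0 → ev l < 0 → k = l := by
    intro k l hk hl
    by_contra hkl
    set u : Fin 4 → (Fin 4 → ℝ) := fun i => ⇑(hA.eigenvectorBasis i) with hu
    set α : ℝ := u k 0 + (b₂₁-4*b₃₂^2) * u k 3 with hα'
    set β : ℝ := u l 0 + (b₂₁-4*b₃₂^2) * u l 3 with hβ'
    have hdotu : ∀ i j, u i ⬝ᵥ u j = if i = j then 1 else 0 := fun i j => herm_dot hA i j
    by_cases hα : α = 0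
    · -- c = u k works
      have hc0 : u k 0 = -(b₂₁-4*b₃₂^2) * u k 3 := by
        have : u k 0 + (b₂₁-4*b₃₂^2) * u k 3 = 0 := hα
        linarith
      have hcne : u k ≠ 0 := by
        intro h
        have := hdotu k k
        rw [h] at this
        simp at this
      have hpos := pos_on_slice b₂₁ b₃₂ hd (u k) hc0 hcne
      have hval : u k ⬝ᵥ (Xform b₂₁ b₃₂ *ᵥ u k) = ev k := by
        have h1 := hA.mulVec_eigenvectorBasis k
        rw [hu]
        simp only [hu] at h1 ⊢
        rw [h1, dotProduct_smul, smul_eq_mul, hdotu k k]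
        simp
        rfl
      rw [hval] at hpos
      linarith
    · -- c = β • u k + (-α) • u l
      set c : Fin 4 → ℝ := β • u k + (-α) • u l with hc
      have hc0 : c 0 = -(b₂₁-4*b₃₂^2) * c 3 := by
        simp only [hc, Pi.add_apply, Pi.smul_apply, smul_eq_mul]
        rw [hα', hβ']
        ring
      have hcne : c ≠ 0 := by
        intro h
        have hdc : u l ⬝ᵥ c = -α := by
          simp only [hc, dotProduct_add, dotProduct_smul, smul_eq_mul,
            hdotu l k, hdotu l l]
          simp [Ne.symm hkl]
        rw [h, dotProduct_zero] at hdc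
        exact hα (by linarith)
      have hpos := pos_on_slice b₂₁ b₃₂ hd c hc0 hcne
      have hval : c ⬝ᵥ (Xform b₂₁ b₃₂ *ᵥ c) = β^2 * ev k + (-α)^2 * ev l := by
        simp only [hc, hu]
        exact eigen_quad hA k l hkl β (-α)
      rw [hval] at hpos
      nlinarith [sq_nonneg β, sq_pos_ne hα, hk, hl]
  -- at least one negative eigenvalue
  have hexneg : ∃ k, ev k < 0 := by
    by_contra h
    push_neg at h
    have : 0 < ∏ i, ev i := Finset.prod_pos fun i _ => lt_of_le_of_ne (h i) (Ne.symm (hne i))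
    rw [hdet] at hdetneg
    linarith
  obtain ⟨k₀, hk₀⟩ := hexneg
  have hfneg : Finset.univ.filter (fun i => ev i < 0) = {k₀} := by
    ext i
    simp only [Finset.mem_filter, Finset.mem_univ, true_and, Finset.mem_singleton]
    constructor
    · intro hi; exact huniq i k₀ hi hk₀
    · intro hi; rw [hi]; exact hk₀
  have hfpos : Finset.univ.filter (fun i => 0 < ev i) = {k₀}ᶜ := by
    ext i
    simp only [Finset.mem_filter, Finset.mem_univ, true_and, Finset.mem_compl,
      Finset.mem_singleton]
    constructor
    · intro hi hik
      rw [hik] at hi; linarith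
    · intro hik
      rcases (hne i).lt_or_gt with h' | h'
      · exact absurd (huniq i k₀ h' hk₀) hik
      · exact h'
  constructor
  · rw [hroots]
    rw [Multiset.filter_map, Multiset.card_map]
    have : (Finset.univ.filter (fun i => 0 < ev i)).card = 3 := by
      rw [hfpos, Finset.card_compl]
      simp
    rw [← this]
    rfl
  · rw [hroots]
    rw [Multiset.filter_map, Multiset.card_map]
    have : (Finset.univ.filter (fun i => ev i < 0)).card = 1 := by
      rw [hfneg]; simp
    rw [← this]
    rfl

lemma psi_linear (b₂₁ b₃₂ : ℝ) : IsLinearMap ℝ (PsiHerm b₂₁ b₃₂) := by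
  constructor
  · intro v w
    ext i j
    fin_cases i <;> fin_cases j <;>
      simp [PsiHerm, Pi.add_apply] <;> push_cast <;> ring
  · intro a v
    ext i j
    fin_cases i <;> fin_cases j <;>
      simp [PsiHerm, Pi.smul_apply, Matrix.smul_apply, smul_eq_mul] <;> push_cast <;> ring

lemma psi_inj (b₂₁ b₃₂ : ℝ) (hd : 0 < b₂₁ - 4*b₃₂^2) :
    Function.Injective (PsiHerm b₂₁ b₃₂) := by
  have hs : 0 < Real.sqrt (b₂₁ - 4*b₃₂^2) := Real.sqrt_pos.mpr hd
  intro v w h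
  have h00 := congrFun (congrFun h 0) 0
  have h01 := congrFun (congrFun h 0) 1
  have h11 := congrFun (congrFun h 1) 1
  simp [PsiHerm, Complex.ext_iff, ← Complex.ofReal_pow] at h00 h01 h11
  obtain ⟨hre, him⟩ := h01
  have e3 : v 3 = w 3 := by
    rcases h11 with e3 | h'
    · exact e3
    · linarith
  have e2 : v 2 = w 2 := by
    rw [e3] at him
    have : Real.sqrt (b₂₁ - 4*b₃₂^2) * v 2 = Real.sqrt (b₂₁ - 4*b₃₂^2) * w 2 := by linarith
    exact mul_left_cancel₀ (ne_of_gt hs) this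
  have e1 : v 1 = w 1 := by
    rw [h00, e2, e3] at hre; linarith
  funext i
  fin_cases i <;> assumption

lemma psi_surj (b₂₁ b₃₂ : ℝ) (hd : 0 < b₂₁ - 4*b₃₂^2) :
    ∀ N : Matrix (Fin 2) (Fin 2) ℂ, Nᴴ = N → ∃ v : Fin 4 → ℝ, PsiHerm b₂₁ b₃₂ v = N := by
  intro N hN
  have hd' : b₂₁ - 4*b₃₂^2 ≠ 0 := ne_of_gt hd
  have hs : Real.sqrt (b₂₁ - 4*b₃₂^2) ≠ 0 := ne_of_gt (Real.sqrt_pos.mpr hd)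
  have hsdd : Real.sqrt (b₂₁ - 4*b₃₂^2)^2 = b₂₁ - 4*b₃₂^2 := Real.sq_sqrt hd.le
  have h00 : ((N 0 0).re : ℂ) = N 0 0 := by
    have := congrFun (congrFun hN 0) 0
    simp [Matrix.conjTranspose_apply, Complex.ext_iff] at this
    rw [Complex.ext_iff]
    constructor
    · simp
    · simp; linarith [this]
  have h11 : ((N 1 1).re : ℂ) = N 1 1 := by
    have := congrFun (congrFun hN 1) 1
    simp [Matrix.conjTranspose_apply, Complex.ext_iff] at this
    rw [Complex.ext_iff]
    constructor
    · simp
    · simp; linarith [this]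
  have h10 : N 1 0 = (starRingEnd ℂ) (N 0 1) := by
    have := congrFun (congrFun hN 0) 1
    rw [Matrix.conjTranspose_apply] at this
    rw [← this]; simp
  refine ⟨![ (N 0 0).re,
      (N 0 0).re + 2*b₃₂*((N 0 1).im/Real.sqrt (b₂₁ - 4*b₃₂^2) + b₃₂*((N 1 1).re/(b₂₁ - 4*b₃₂^2)))
      - 2*b₃₂^2*((N 1 1).re/(b₂₁ - 4*b₃₂^2)) - (N 0 1).re,
      (N 0 1).im/Real.sqrt (b₂₁ - 4*b₃₂^2) + b₃₂*((N 1 1).re/(b₂₁ - 4*b₃₂^2)),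
      (N 1 1).re/(b₂₁ - 4*b₃₂^2) ], ?_⟩
  ext i j
  fin_cases i <;> fin_cases j
  · simpa [PsiHerm] using h00
  · show _ = N 0 1
    simp only [PsiHerm, Matrix.cons_val', Matrix.cons_val_zero, Matrix.cons_val_one,
      Matrix.head_cons, Matrix.empty_val', Matrix.cons_val_fin_one, Matrix.head_fin_const]
    rw [Complex.ext_iff]
    constructor
    · simp [Matrix.cons_val_zero, Matrix.cons_val_one]
      field_simp
      ring
    · simp
      field_simp
      nlinarith [hsdd]
  · show _ = N 1 0
    rw [h10]
    simp only [PsiHerm, Matrix.cons_val', Matrix.cons_val_zero, Matrix.cons_val_one,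
      Matrix.head_cons, Matrix.empty_val', Matrix.cons_val_fin_one, Matrix.head_fin_const]
    rw [Complex.ext_iff]
    constructor
    · simp [Matrix.cons_val_zero, Matrix.cons_val_one]
      field_simp
      ring
    · simp
      field_simp
      rw [show b₂₁ - b₃₂ ^ 2 * 4 = b₂₁ - 4 * b₃₂ ^ 2 by ring]
      field_simp
      ring
  · show _ = N 1 1
    simp only [PsiHerm, Matrix.cons_val', Matrix.cons_val_zero, Matrix.cons_val_one,
      Matrix.head_cons, Matrix.empty_val', Matrix.cons_val_fin_one, Matrix.head_fin_const]
    rw [← h11]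
    norm_cast
    simp
    have hc : ((b₂₁:ℂ) - 4*(b₃₂:ℂ)^2) ≠ 0 := by
      have : (((b₂₁ - 4*b₃₂^2 : ℝ)):ℂ) ≠ 0 := Complex.ofReal_ne_zero.mpr hd'
      push_cast at this
      exact this
    field_simp

lemma psi_herm (b₂₁ b₃₂ : ℝ) (v : Fin 4 → ℝ) :
    (PsiHerm b₂₁ b₃₂ v)ᴴ = PsiHerm b₂₁ b₃₂ v := by
  ext i j
  fin_cases i <;> fin_cases j <;>
      simp [PsiHerm, Matrix.conjTranspose_apply, Complex.ext_iff, ← Complex.ofReal_pow] <;>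
    ring

lemma psi_det (b₂₁ b₃₂ : ℝ) (hd : 0 < b₂₁ - 4*b₃₂^2) (v : Fin 4 → ℝ) :
    -(PsiHerm b₂₁ b₃₂ v).det = ((v ⬝ᵥ (Xform b₂₁ b₃₂ *ᵥ v) : ℝ) : ℂ) := by
  have hsdd : Real.sqrt (b₂₁ - 4*b₃₂^2)^2 = b₂₁ - 4*b₃₂^2 := Real.sq_sqrt hd.le
  have hrhs : v ⬝ᵥ (Xform b₂₁ b₃₂ *ᵥ v) =
      (v 0 - v 1 + 2*b₃₂*(v 2) - 2*b₃₂^2*(v 3))^2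
      + (Real.sqrt (b₂₁ - 4*b₃₂^2) * v 2 - b₃₂ * Real.sqrt (b₂₁ - 4*b₃₂^2) * v 3)^2
      - (v 0) * ((b₂₁-4*b₃₂^2) * v 3) := by
    simp [Xform, Matrix.mulVec, dotProduct, Fin.sum_univ_four]
    nlinarith [hsdd]
  rw [hrhs]
  unfold PsiHerm
  rw [Matrix.det_fin_two_of]
  push_cast
  linear_combination (-(Real.sqrt (b₂₁ - 4*b₃₂^2) * v 2 - b₃₂ * Real.sqrt (b₂₁ - 4*b₃₂^2) * v 3
    : ℂ)^2) * Complex.I_sq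

end Aux

/-- **The form `X` has signature `(3,1)` and is the transport of `−det` under `Ψ`.**
If `d = b₂₁ − 4b₃₂² > 0` then `X` has exactly three positive eigenvalues and one negative
eigenvalue, `Ψ` is a linear isomorphism from `ℝ⁴` onto `Herm₂`, and
`−det(Ψ v) = vᵀ X v` for all `v ∈ ℝ⁴`. -/
theorem signature_and_transport (b₂₁ b₃₂ : ℝ) (hd : 0 < b₂₁ - 4*b₃₂^2) :
    (((Xform b₂₁ b₃₂).charpoly.roots.filter (fun μ : ℝ => 0 < μ)).card = 3 ∧
     ((Xform b₂₁ b₃₂).charpoly.roots.filter (fun μ : ℝ => μ < 0)).card = 1) ∧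
    IsLinearMap ℝ (PsiHerm b₂₁ b₃₂) ∧
    Function.Injective (PsiHerm b₂₁ b₃₂) ∧
    (∀ N : Matrix (Fin 2) (Fin 2) ℂ, Nᴴ = N → ∃ v : Fin 4 → ℝ, PsiHerm b₂₁ b₃₂ v = N) ∧
    (∀ v : Fin 4 → ℝ, (PsiHerm b₂₁ b₃₂ v)ᴴ = PsiHerm b₂₁ b₃₂ v) ∧
    (∀ v : Fin 4 → ℝ,
      -(PsiHerm b₂₁ b₃₂ v).det = ((v ⬝ᵥ (Xform b₂₁ b₃₂ *ᵥ v) : ℝ) : ℂ)) :=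
  ⟨count_lemma b₂₁ b₃₂ hd, psi_linear b₂₁ b₃₂, psi_inj b₂₁ b₃₂ hd, psi_surj b₂₁ b₃₂ hd,
    psi_herm b₂₁ b₃₂, fun v => psi_det b₂₁ b₃₂ hd v⟩

end
end

section
/- Let E, F ∈ ℂ∖{0} and τ ∈ ℂ, and suppose the matrices m = [[E, 1],[0, E⁻¹]] and l = [[F, τ],[0, F⁻¹]] in SL₂(ℂ) commute. Then τ·(E − E⁻¹) = F − F⁻¹ (equivalently, τ·sinh(a/2) = sinh(b/2) when E = e^{a/2} and F = e^{b/2}), and consequently τ²·(tr(m)² − 4) + 4 = tr(l)². In particular, if τ is purely imaginary and nonzero and tr(m)² is a real number in the interval [0,4), then tr(l)² is a real number greater than 4. -/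
open Matrix
noncomputable section

/-- **The τ-invariant relation for commuting upper-triangular matrices.**
If `m = [[E,1],[0,E⁻¹]]` and `l = [[F,τ],[0,F⁻¹]]` in `SL₂(ℂ)` commute then
`τ(E − E⁻¹) = F − F⁻¹` and `τ²(tr(m)² − 4) + 4 = tr(l)²`; in particular if `τ` is purely
imaginary and nonzero and `tr(m)²` is a real number in `[0, 4)`, then `tr(l)²` is a real
number greater than `4`. -/
theorem tau_invariant_relation (E F τ : ℂ) (hE : E ≠ 0) (hF : F ≠ 0)
    (hcomm : (!![E, 1; 0, E⁻¹] : Matrix (Fin 2) (Fin 2) ℂ) * !![F, τ; 0, F⁻¹] =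
      !![F, τ; 0, F⁻¹] * !![E, 1; 0, E⁻¹]) :
    τ * (E - E⁻¹) = F - F⁻¹ ∧
    τ^2 * ((E + E⁻¹)^2 - 4) + 4 = (F + F⁻¹)^2 ∧
    (τ.re = 0 → τ ≠ 0 → ((E + E⁻¹)^2).im = 0 → 0 ≤ ((E + E⁻¹)^2).re →
      ((E + E⁻¹)^2).re < 4 →
      ((F + F⁻¹)^2).im = 0 ∧ 4 < ((F + F⁻¹)^2).re) := by
  have h01 := congrFun (congrFun hcomm 0) 1
  simp [Matrix.mul_apply, Fin.sum_univ_two] at h01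
  have hEinv : E * E⁻¹ = 1 := mul_inv_cancel₀ hE
  have hFinv : F * F⁻¹ = 1 := mul_inv_cancel₀ hF
  have h1 : τ * (E - E⁻¹) = F - F⁻¹ := by linear_combination h01
  have h2 : τ^2 * ((E + E⁻¹)^2 - 4) + 4 = (F + F⁻¹)^2 := by
    linear_combination (τ*(E-E⁻¹)+(F-F⁻¹)) * h1 + 4*τ^2*hEinv - 4*hFinv
  refine ⟨h1, h2, fun hτre hτne him hre0 hre4 => ?_⟩
  set t := τ.im with ht
  have hτ : τ = (t : ℂ) * Complex.I := by
    apply Complex.ext <;> simp [hτre, ht]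
  have htne : (t : ℝ) ≠ 0 := by
    intro h0
    apply hτne
    rw [hτ, h0]; simp
  set s := ((E + E⁻¹)^2).re with hs
  have hsc : (E + E⁻¹)^2 = (s : ℂ) := by
    apply Complex.ext <;> simp [him, hs]
  have h3 : (F + F⁻¹)^2 = ((t^2 * (4 - s) + 4 : ℝ) : ℂ) := by
    rw [← h2, hsc, hτ]
    push_cast
    ring_nf
    simp [Complex.I_sq]
    ring
  constructor
  · rw [h3]; exact Complex.ofReal_im _
  · rw [h3]
    simp only [Complex.ofReal_re]
    have hpos : 0 < t^2 := by positivity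
    nlinarith

end
end
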